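/- Let (X,T) be a minimal Cantor system conjugate via φ to the induced system (U, T_U) on a proper nonempty clopen set U ⊊ X. Then sup_{μ ∈ M(X,T)} μ(φ^n(X)) → 0 as n → ∞. In particular, the set ∩_{n∈ℕ} φ^n(X) has measure zero with respect to every T-invariant Borel probability measure. -/

import Mathlib

open Set MeasureTheory Filter
open ENNReal

/-- Return time function `r_A(x) = inf {n > 0 : Tⁿ x ∈ A}`. -/
noncomputable def retTime {α : Type*} (T : α → α) (A : Set α) (x : α) : ℕ :=
  sInf {n : ℕ | 0 < n ∧ T^[n] x ∈ A}

/-- Minimality: every (two-sided) orbit is dense. -/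
def IsMinimalHomeo {X : Type*} [TopologicalSpace X] (T : X ≃ₜ X) : Prop :=
  ∀ x : X, Dense {y : X | ∃ n : ℤ, (T.toEquiv ^ n) x = y}

/-- The space of `T`-invariant Borel probability measures. -/
def InvProb {α : Type*} [MeasurableSpace α] (T : α → α) : Type _ :=
  {μ : Measure α // IsProbabilityMeasure μ ∧ ∀ s, MeasurableSet s → μ (T ⁻¹' s) = μ s}

section Aux

variable {X : Type*} [MetricSpace X] [CompactSpace X]

lemma zpow_cont (T : X ≃ₜ X) : ∀ n : ℤ, Continuous ⇑(T.toEquiv ^ n)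
  | Int.ofNat m => by
      rw [Int.ofNat_eq_coe, zpow_natCast, ← Equiv.Perm.iterate_eq_pow]
      exact T.continuous.iterate m
  | Int.negSucc m => by
      rw [zpow_negSucc, ← inv_pow, ← Equiv.Perm.iterate_eq_pow]
      have : ⇑(T.toEquiv)⁻¹ = ⇑T.symm := rfl
      rw [this]
      exact T.symm.continuous.iterate (m + 1)

lemma minimal_closed_inv (T : X ≃ₜ X) (hmin : IsMinimalHomeo T) (C : Set X)
    (hC : IsClosed C) (hCne : C.Nonempty) (hinv : ⇑T '' C ⊆ C) : C = univ := by
  have hiter : ∀ m, ∀ z ∈ C, (⇑T)^[m] z ∈ C := by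
    intro m
    induction m with
    | zero => intro z hz; simpa using hz
    | succ k ih =>
        intro z hz
        rw [Function.iterate_succ_apply']
        exact hinv ⟨_, ih z hz, rfl⟩
  have hdec : ∀ n : ℕ, (⇑T)^[n + 1] '' C ⊆ (⇑T)^[n] '' C := by
    intro n
    rw [Function.iterate_succ, image_comp]
    exact image_mono hinv
  have hKne : (⋂ n : ℕ, (⇑T)^[n] '' C).Nonempty := by
    apply IsCompact.nonempty_iInter_of_sequence_nonempty_isCompact_isClosed
    · exact hdec
    · exact fun n => hCne.image _
    · exact hC.isCompact.image (T.continuous.iterate 0)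
    · exact fun (n : ℕ) => (hC.isCompact.image (T.continuous.iterate n)).isClosed
  obtain ⟨y, hy⟩ := hKne
  have horb : {w : X | ∃ n : ℤ, (T.toEquiv ^ n) y = w} ⊆ C := by
    rintro w ⟨n, rfl⟩
    match n with
    | Int.ofNat m =>
        have hyC : y ∈ C := by
          have := mem_iInter.1 hy 0
          simpa using this
        have : ((T.toEquiv ^ (Int.ofNat m)) y) = (⇑T)^[m] y := by
          rw [Int.ofNat_eq_coe, zpow_natCast, ← Equiv.Perm.iterate_eq_pow]; rfl
        rw [this]
        exact hiter m y hyC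
    | Int.negSucc m =>
        have hy' : y ∈ (⇑T)^[m + 1] '' C := mem_iInter.1 hy (m + 1)
        obtain ⟨z, hz, hzy⟩ := hy'
        have : ((T.toEquiv ^ (Int.negSucc m)) y) = z := by
          rw [zpow_negSucc, Equiv.Perm.inv_def]
          apply (T.toEquiv ^ (m + 1)).injective
          rw [Equiv.apply_symm_apply]
          rw [← Equiv.Perm.iterate_eq_pow]
          exact hzy.symm
        rw [this]; exact hz
  have := closure_minimal horb hC
  rw [(hmin y).closure_eq] at this
  exact eq_univ_of_univ_subset this

lemma exists_return (T : X ≃ₜ X) (hmin : IsMinimalHomeo T) (U : Set X)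
    (hUo : IsOpen U) (hne : U.Nonempty) :
    ∀ x : X, ∃ n : ℕ, 0 < n ∧ (⇑T)^[n] x ∈ U := by
  by_contra h
  push_neg at h
  obtain ⟨x, hx⟩ := h
  set C : Set X := {z : X | ∀ n : ℕ, 0 < n → (⇑T)^[n] z ∉ U} with hCdef
  have hCclosed : IsClosed C := by
    have : C = ⋂ n : ℕ, (⇑T)^[n + 1] ⁻¹' Uᶜ := by
      ext z
      simp only [hCdef, mem_setOf_eq, mem_iInter, mem_preimage, mem_compl_iff]
      constructor
      · intro h n; exact h (n + 1) (Nat.succ_pos n)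
      · intro h n hn
        obtain ⟨m, rfl⟩ := Nat.exists_eq_add_of_lt hn
        simpa using h m
    rw [this]
    exact isClosed_iInter fun n => (hUo.isClosed_compl).preimage (T.continuous.iterate (n + 1))
  have hCinv : ⇑T '' C ⊆ C := by
    rintro _ ⟨z, hz, rfl⟩ n hn
    have := hz (n + 1) (Nat.succ_pos n)
    rwa [Function.iterate_succ_apply] at this
  have hCuniv : C = univ := minimal_closed_inv T hmin C hCclosed ⟨x, fun n hn => hx n hn⟩ hCinv
  obtain ⟨u, hu⟩ := hne
  have : T.symm u ∈ C := hCuniv ▸ mem_univ _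
  have h1 := this 1 one_pos
  simp only [Function.iterate_one] at h1
  rw [Homeomorph.apply_symm_apply] at h1
  exact h1 hu

end Aux


section MeasAux
variable {X : Type*} [MetricSpace X] [CompactSpace X] [MeasurableSpace X] [BorelSpace X]
  (T : X ≃ₜ X) (μ : Measure X)

lemma meas_inv_iter (hinv : ∀ s, MeasurableSet s → μ (⇑T ⁻¹' s) = μ s) :
    ∀ k : ℕ, ∀ s : Set X, MeasurableSet s → μ ((⇑T)^[k] ⁻¹' s) = μ s := by
  intro k
  induction k with
  | zero => intro s _; simp
  | succ n ih =>
      intro s hs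
      rw [Function.iterate_succ, preimage_comp]
      rw [hinv _ ((T.continuous.iterate n).measurable hs)]
      exact ih s hs

lemma meas_inv_symm (hinv : ∀ s, MeasurableSet s → μ (⇑T ⁻¹' s) = μ s) :
    ∀ s : Set X, MeasurableSet s → μ (⇑T.symm ⁻¹' s) = μ s := by
  intro s hs
  have h1 : ⇑T.symm ⁻¹' s = ⇑T '' s := by rw [← Homeomorph.preimage_symm]
  rw [h1]
  have h2 : MeasurableSet (⇑T '' s) := T.measurableEmbedding.measurableSet_image' hs
  have := hinv _ h2
  rw [preimage_image_eq s T.injective] at this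
  exact this.symm

lemma meas_inv_zpow (hinv : ∀ s, MeasurableSet s → μ (⇑T ⁻¹' s) = μ s) :
    ∀ n : ℤ, ∀ s : Set X, MeasurableSet s → μ (⇑(T.toEquiv ^ n) ⁻¹' s) = μ s := by
  intro n s hs
  match n with
  | Int.ofNat m =>
      have hc : ⇑(T.toEquiv ^ (Int.ofNat m)) = (⇑T)^[m] := by
        rw [Int.ofNat_eq_coe, zpow_natCast, ← Equiv.Perm.iterate_eq_pow]; rfl
      rw [hc]
      exact meas_inv_iter T μ hinv m s hs
  | Int.negSucc m =>
      have hc : ⇑(T.toEquiv ^ (Int.negSucc m)) = (⇑T.symm)^[m + 1] := by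
        rw [zpow_negSucc, ← inv_pow, ← Equiv.Perm.iterate_eq_pow]; rfl
      rw [hc]
      exact meas_inv_iter T.symm μ (meas_inv_symm T μ hinv) (m + 1) s hs


lemma unif_pos {T : X ≃ₜ X} (hmin : ∀ x : X, Dense {y : X | ∃ n : ℤ, (T.toEquiv ^ n) x = y})
    (V : Set X) (hVo : IsOpen V) (hVne : V.Nonempty) :
    ∃ c : ℝ≥0∞, 0 < c ∧ ∀ ν : Measure X, IsProbabilityMeasure ν →
      (∀ s, MeasurableSet s → ν (⇑T ⁻¹' s) = ν s) → c ≤ ν V := by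
  have hXne : Nonempty X := ⟨hVne.some⟩
  have hcover : univ ⊆ ⋃ n : ℤ, ⇑(T.toEquiv ^ n) ⁻¹' V := by
    intro x _
    obtain ⟨y, ⟨n, hny⟩, hyV⟩ := (hmin x).exists_mem_open hVo hVne
    exact mem_iUnion.2 ⟨n, by simp [mem_preimage, hny, hyV]⟩
  obtain ⟨t, ht⟩ := isCompact_univ.elim_finite_subcover
    (fun n : ℤ => ⇑(T.toEquiv ^ n) ⁻¹' V) (fun n => hVo.preimage (zpow_cont T n)) hcover
  have htne : t.Nonempty := by
    rcases Finset.eq_empty_or_nonempty t with rfl | h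
    · exfalso
      obtain ⟨x⟩ := hXne
      simpa using ht (mem_univ x)
    · exact h
  refine ⟨(t.card : ℝ≥0∞)⁻¹, ?_, ?_⟩
  · simp [ENNReal.inv_pos]
  · intro ν hprob hinv
    have h1 : (1 : ℝ≥0∞) = ν univ := (measure_univ).symm
    have h2 : ν univ ≤ ∑ n ∈ t, ν (⇑(T.toEquiv ^ n) ⁻¹' V) :=
      le_trans (measure_mono ht) (measure_biUnion_finset_le t _)
    have h3 : ∀ n ∈ t, ν (⇑(T.toEquiv ^ n) ⁻¹' V) = ν V := fun n _ =>
      meas_inv_zpow T ν hinv n V hVo.measurableSet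
    rw [Finset.sum_congr rfl h3, Finset.sum_const, nsmul_eq_mul] at h2
    have h4 : (1 : ℝ≥0∞) ≤ (t.card : ℝ≥0∞) * ν V := h1 ▸ h2
    calc (t.card : ℝ≥0∞)⁻¹ = (t.card : ℝ≥0∞)⁻¹ * 1 := (mul_one _).symm
      _ ≤ (t.card : ℝ≥0∞)⁻¹ * ((t.card : ℝ≥0∞) * ν V) := by gcongr
      _ = ((t.card : ℝ≥0∞)⁻¹ * (t.card : ℝ≥0∞)) * ν V := by ring
      _ = ν V := by
          rw [ENNReal.inv_mul_cancel (by exact_mod_cast Finset.card_ne_zero.2 htne)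
            (ENNReal.natCast_ne_top _), one_mul]

lemma kac (T : X ≃ₜ X) (U : Set X) (hUm : MeasurableSet U)
    (hent : ∀ x : X, ∃ n : ℕ, 0 < n ∧ (⇑T)^[n] x ∈ U)
    (μ : Measure X) (hprob : IsProbabilityMeasure μ)
    (hinv : ∀ s, MeasurableSet s → μ (⇑T ⁻¹' s) = μ s)
    (A : Set X) (hA : MeasurableSet A) (hAU : A ⊆ U) :
    μ (U ∩ (fun x => (⇑T)^[retTime (⇑T) U x] x) ⁻¹' A) = μ A := by
  classical
  set W : ℕ → Set X := fun n =>
    ((⇑T)^[n] ⁻¹' A) ∩ ⋂ i ∈ Finset.Ioo 0 n, ((⇑T)^[i] ⁻¹' Uᶜ) with hWdef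
  have hWmem : ∀ n x, x ∈ W n ↔ ((⇑T)^[n] x ∈ A ∧ ∀ i, 0 < i → i < n → (⇑T)^[i] x ∉ U) := by
    intro n x
    simp only [hWdef, mem_inter_iff, mem_preimage, mem_iInter, Finset.mem_Ioo,
      mem_compl_iff, and_congr_right_iff]
    intro _
    constructor
    · intro h i h1 h2; exact h i ⟨h1, h2⟩
    · intro h i hi; exact h i hi.1 hi.2
  have hWm : ∀ n, MeasurableSet (W n) := by
    intro n
    apply MeasurableSet.inter
    · exact (T.continuous.iterate n).measurable hA
    · exact MeasurableSet.biInter (Finset.countable_toSet _)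
        (fun i _ => (T.continuous.iterate i).measurable hUm.compl)
  have hW1 : W 1 = ⇑T ⁻¹' A := by
    ext x
    rw [hWmem]
    simp only [Function.iterate_one, mem_preimage]
    exact ⟨fun h => h.1, fun h => ⟨h, fun i h1 h2 => absurd h2 (by omega)⟩⟩
  have hWrec : ∀ n : ℕ, 1 ≤ n → W (n + 1) = ⇑T ⁻¹' (W n \ U) := by
    intro n hn
    ext x
    rw [hWmem]
    simp only [mem_preimage, mem_diff]
    rw [hWmem]
    constructor
    · rintro ⟨hA1, h2⟩
      refine ⟨⟨?_, ?_⟩, ?_⟩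
      · rwa [← Function.iterate_succ_apply]
      · intro i h1 h3
        rw [← Function.iterate_succ_apply]
        exact h2 (i + 1) (by omega) (by omega)
      · exact h2 1 one_pos (by omega)
    · rintro ⟨⟨hA1, h2⟩, h3⟩
      constructor
      · rwa [Function.iterate_succ_apply]
      · intro i h1 h4
        rcases eq_or_lt_of_le (show 1 ≤ i from h1) with h | h
        · simpa [← h] using h3
        · obtain ⟨j, rfl⟩ := Nat.exists_eq_add_of_lt h
          rw [Function.iterate_succ_apply]
          exact h2 (1 + j) (by omega) (by omega)
  have hfin : ∀ s : Set X, μ s ≠ ∞ := fun s => measure_ne_top μ s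
  -- partial sums
  have key : ∀ N : ℕ, μ (W (N + 1)) + ∑ n ∈ Finset.range N, μ (W (n + 1) ∩ U) = μ A := by
    intro N
    induction N with
    | zero => simpa [hW1] using hinv A hA
    | succ N ih =>
        rw [Finset.sum_range_succ]
        have step : μ (W (N + 2)) + μ (W (N + 1) ∩ U) = μ (W (N + 1)) := by
          have h1 : μ (W (N + 2)) = μ (W (N + 1) \ U) := by
            rw [hWrec (N + 1) (by omega)]
            exact hinv _ ((hWm (N + 1)).diff hUm)
          rw [h1, add_comm]
          exact measure_inter_add_diff _ hUm
        calc μ (W (N + 1 + 1)) + (∑ n ∈ Finset.range N, μ (W (n + 1) ∩ U) + μ (W (N + 1) ∩ U))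
            = (μ (W (N + 2)) + μ (W (N + 1) ∩ U)) + ∑ n ∈ Finset.range N, μ (W (n + 1) ∩ U) := by
              ring
          _ = μ (W (N + 1)) + ∑ n ∈ Finset.range N, μ (W (n + 1) ∩ U) := by rw [step]
          _ = μ A := ih
  -- tail tends to zero
  set Z : ℕ → Set X := fun N => ⋂ i ∈ Finset.range N, ((⇑T)^[i + 1] ⁻¹' Uᶜ) with hZdef
  have hZm : ∀ N, MeasurableSet (Z N) := fun N =>
    MeasurableSet.biInter (Finset.countable_toSet _)
      (fun i _ => (T.continuous.iterate (i + 1)).measurable hUm.compl)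
  have hZanti : Antitone Z := by
    intro a b hab x hx
    simp only [hZdef, mem_iInter, Finset.mem_range, mem_preimage, mem_compl_iff] at hx ⊢
    intro i hi
    exact hx i (lt_of_lt_of_le hi hab)
  have hZempty : ⋂ N, Z N = ∅ := by
    rw [eq_empty_iff_forall_notMem]
    intro x hx
    obtain ⟨n, hn, hxU⟩ := hent x
    have hxZ : x ∈ Z n := mem_iInter.1 hx n
    simp only [hZdef, mem_iInter, Finset.mem_range, mem_preimage, mem_compl_iff] at hxZ
    exact hxZ (n - 1) (by omega) (by simpa [Nat.sub_add_cancel hn] using hxU)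
  have hZtend : Tendsto (fun N => μ (Z N)) atTop (nhds 0) := by
    have := tendsto_measure_iInter_atTop (μ := μ)
      (fun N => (hZm N).nullMeasurableSet) hZanti ⟨0, hfin _⟩
    rwa [hZempty, measure_empty] at this
  have hWZ : ∀ N, W (N + 1) ⊆ Z N := by
    intro N x hx
    rw [hWmem] at hx
    simp only [hZdef, mem_iInter, Finset.mem_range, mem_preimage, mem_compl_iff]
    intro i hi
    exact hx.2 (i + 1) (by omega) (by omega)
  have hWtend : Tendsto (fun N => μ (W (N + 1))) atTop (nhds 0) := by
    apply tendsto_of_tendsto_of_tendsto_of_le_of_le tendsto_const_nhds hZtend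
    · exact fun N => zero_le
    · exact fun N => measure_mono (hWZ N)
  -- sum converges to μ A
  have hsum : (∑' n : ℕ, μ (W (n + 1) ∩ U)) = μ A := by
    have h1 : Tendsto (fun N => ∑ n ∈ Finset.range N, μ (W (n + 1) ∩ U)) atTop
        (nhds (∑' n : ℕ, μ (W (n + 1) ∩ U))) := ENNReal.tendsto_nat_tsum _
    have h2 : Tendsto (fun N => ∑ n ∈ Finset.range N, μ (W (n + 1) ∩ U)) atTop
        (nhds (μ A)) := by
      have h3 : (fun N => ∑ n ∈ Finset.range N, μ (W (n + 1) ∩ U))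
          = fun N => μ A - μ (W (N + 1)) := by
        funext N
        have := key N
        have h4 : μ A - μ (W (N + 1)) = ∑ n ∈ Finset.range N, μ (W (n + 1) ∩ U) :=
          ENNReal.sub_eq_of_eq_add (hfin _) (by rw [← this, add_comm])
        rw [h4]
      rw [h3]
      have := ENNReal.Tendsto.sub (tendsto_const_nhds (x := μ A)) hWtend
        (Or.inl (hfin A))
      rwa [tsub_zero] at this
    exact tendsto_nhds_unique h1 h2
  -- the union identity
  have hunion : U ∩ (fun x => (⇑T)^[retTime (⇑T) U x] x) ⁻¹' A
      = ⋃ n : ℕ, (W (n + 1) ∩ U) := by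
    ext x
    simp only [mem_inter_iff, mem_preimage, mem_iUnion]
    constructor
    · rintro ⟨hxU, hxA⟩
      have hne : {n : ℕ | 0 < n ∧ (⇑T)^[n] x ∈ U}.Nonempty := hent x
      have hmem := Nat.sInf_mem hne
      set r := retTime (⇑T) U x with hr
      have hrpos : 0 < r := hmem.1
      refine ⟨r - 1, ?_, hxU⟩
      rw [hWmem]
      constructor
      · rwa [Nat.sub_add_cancel hrpos]
      · intro i h1 h2
        intro hiU
        have h5 : r ≤ i := Nat.sInf_le ⟨h1, hiU⟩
        omega
    · rintro ⟨n, hW, hxU⟩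
      rw [hWmem] at hW
      refine ⟨hxU, ?_⟩
      have hrn : retTime (⇑T) U x = n + 1 := by
        apply le_antisymm
        · exact Nat.sInf_le ⟨Nat.succ_pos n, hAU hW.1⟩
        · by_contra h
          push_neg at h
          have hmem := Nat.sInf_mem (⟨n + 1, Nat.succ_pos n, hAU hW.1⟩ :
            {m : ℕ | 0 < m ∧ (⇑T)^[m] x ∈ U}.Nonempty)
          exact hW.2 _ hmem.1 h hmem.2
      rw [hrn]
      exact hW.1
  have hdisj : Pairwise (Function.onFun Disjoint (fun n : ℕ => W (n + 1) ∩ U)) := by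
    have hd : ∀ m n : ℕ, m < n → Disjoint (W (m + 1) ∩ U) (W (n + 1) ∩ U) := by
      intro m n h
      rw [disjoint_left]
      rintro x ⟨hWm', _⟩ ⟨hWn', hxU⟩
      rw [hWmem] at hWm' hWn'
      exact hWn'.2 (m + 1) (by omega) (by omega) (hAU hWm'.1)
    intro m n hmn
    rcases lt_or_gt_of_ne hmn with h | h
    · exact hd m n h
    · exact (hd n m h).symm
  rw [hunion, measure_iUnion hdisj (fun n => (hWm (n + 1)).inter hUm)]
  exact hsum

lemma step_meas (T : X ≃ₜ X) (U : Set X) (hUm : MeasurableSet U)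
    (hent : ∀ x : X, ∃ n : ℕ, 0 < n ∧ (⇑T)^[n] x ∈ U)
    (φ : X → X) (hφc : Continuous φ) (hφi : Function.Injective φ) (hφr : Set.range φ = U)
    (hconj : ∀ x : X, φ (T x) = (⇑T)^[retTime (⇑T) U (φ x)] (φ x))
    (μ : Measure X) (hprob : IsProbabilityMeasure μ)
    (hinv : ∀ s, MeasurableSet s → μ (⇑T ⁻¹' s) = μ s) (h0 : μ U ≠ 0) :
    ∃ ν : Measure X, IsProbabilityMeasure ν ∧ (∀ s, MeasurableSet s → ν (⇑T ⁻¹' s) = ν s) ∧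
      ∀ A : Set X, μ (φ '' A) = μ U * ν A := by
  have hemb : MeasurableEmbedding φ := (hφc.isClosedEmbedding hφi).measurableEmbedding
  set ν : Measure X := (μ U)⁻¹ • μ.comap φ with hν
  have happly : ∀ s : Set X, ν s = (μ U)⁻¹ * μ (φ '' s) := by
    intro s
    rw [hν, Measure.smul_apply, hemb.comap_apply, smul_eq_mul]
  have hUtop : μ U ≠ ∞ := measure_ne_top μ U
  have hmul : ∀ s : Set X, μ (φ '' s) = μ U * ν s := by
    intro s
    rw [happly, ← mul_assoc, ENNReal.mul_inv_cancel h0 hUtop, one_mul]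
  have hkey : ∀ s : Set X,
      φ '' (⇑T ⁻¹' s) = U ∩ (fun x => (⇑T)^[retTime (⇑T) U x] x) ⁻¹' (φ '' s) := by
    intro s
    ext u
    constructor
    · rintro ⟨x, hx, rfl⟩
      refine ⟨hφr ▸ mem_range_self x, ?_⟩
      rw [mem_preimage, ← hconj x]
      exact ⟨T x, hx, rfl⟩
    · rintro ⟨huU, hu⟩
      rw [← hφr] at huU
      obtain ⟨x, rfl⟩ := huU
      rw [mem_preimage, ← hconj x] at hu
      obtain ⟨z, hz, hzx⟩ := hu
      have hzT : z = T x := hφi hzx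
      exact ⟨x, by rwa [mem_preimage, ← hzT], rfl⟩
  refine ⟨ν, ?_, ?_, hmul⟩
  · constructor
    rw [happly, image_univ, hφr, ENNReal.inv_mul_cancel h0 hUtop]
  · intro s hs
    rw [happly, happly, hkey s,
      kac T U hUm hent μ hprob hinv (φ '' s) (hemb.measurableSet_image' hs)
        (hφr ▸ image_subset_range φ s)]

lemma geom_bound (T : X ≃ₜ X) (U : Set X) (hUm : MeasurableSet U)
    (hent : ∀ x : X, ∃ n : ℕ, 0 < n ∧ (⇑T)^[n] x ∈ U)
    (φ : X → X) (hφc : Continuous φ) (hφi : Function.Injective φ) (hφr : Set.range φ = U)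
    (hconj : ∀ x : X, φ (T x) = (⇑T)^[retTime (⇑T) U (φ x)] (φ x))
    (r : ℝ≥0∞)
    (hr : ∀ μ : Measure X, IsProbabilityMeasure μ →
      (∀ s, MeasurableSet s → μ (⇑T ⁻¹' s) = μ s) → μ U ≤ r)
    (hpos : ∀ μ : Measure X, IsProbabilityMeasure μ →
      (∀ s, MeasurableSet s → μ (⇑T ⁻¹' s) = μ s) → μ U ≠ 0) :
    ∀ n : ℕ, ∀ μ : Measure X, IsProbabilityMeasure μ →
      (∀ s, MeasurableSet s → μ (⇑T ⁻¹' s) = μ s) → μ (Set.range (φ^[n])) ≤ r ^ n := by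
  intro n
  induction n with
  | zero =>
      intro μ hp hi
      rw [Function.iterate_zero, Set.range_id, pow_zero]
      exact le_of_eq hp.measure_univ
  | succ n ih =>
      intro μ hp hi
      obtain ⟨ν, hν1, hν2, hν3⟩ :=
        step_meas T U hUm hent φ hφc hφi hφr hconj μ hp hi (hpos μ hp hi)
      have hre : Set.range (φ^[n + 1]) = φ '' Set.range (φ^[n]) := by
        rw [Function.iterate_succ']
        exact range_comp φ _
      rw [hre, hν3]
      calc μ U * ν (Set.range (φ^[n])) ≤ r * r ^ n :=
            mul_le_mul' (hr μ hp hi) (ih ν hν1 hν2)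
        _ = r ^ (n + 1) := (pow_succ' r n).symm

end MeasAux

theorem stmt5 {X : Type*} [MetricSpace X] [CompactSpace X]
    [TotallyDisconnectedSpace X] [PerfectSpace X]
    [MeasurableSpace X] [BorelSpace X]
    (T : X ≃ₜ X) (hmin : IsMinimalHomeo T)
    (U : Set X) (hU : IsClopen U) (hne : U.Nonempty) (hproper : U ≠ univ)
    (φ : X → X) (hφc : Continuous φ) (hφi : Function.Injective φ)
    (hφr : Set.range φ = U)
    (hconj : ∀ x : X, φ (T x) = (⇑T)^[retTime (⇑T) U (φ x)] (φ x)) :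
    Tendsto (fun n : ℕ => ⨆ μ : InvProb (⇑T), μ.1 (Set.range (φ^[n]))) atTop (nhds 0) ∧
    ∀ μ : InvProb (⇑T), μ.1 (⋂ n : ℕ, Set.range (φ^[n])) = 0 := by
  have hUm : MeasurableSet U := hU.2.measurableSet
  have hent := exists_return T hmin U hU.2 hne
  obtain ⟨c, hc0, hc⟩ := unif_pos (T := T) hmin Uᶜ hU.1.isOpen_compl (nonempty_compl.2 hproper)
  obtain ⟨c', hc'0, hc'⟩ := unif_pos (T := T) hmin U hU.2 hne
  have hpos : ∀ μ : Measure X, IsProbabilityMeasure μ →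
      (∀ s, MeasurableSet s → μ (⇑T ⁻¹' s) = μ s) → μ U ≠ 0 := by
    intro μ hp hi
    exact (lt_of_lt_of_le hc'0 (hc' μ hp hi)).ne'
  set c₁ : ℝ≥0∞ := min c 1 with hc₁def
  have hc₁0 : 0 < c₁ := lt_min hc0 zero_lt_one
  have hc₁top : c₁ ≠ ∞ := ((min_le_right c 1).trans_lt ENNReal.one_lt_top).ne
  set r : ℝ≥0∞ := 1 - c₁ with hrdef
  have hr1 : r < 1 := ENNReal.sub_lt_self one_ne_top one_ne_zero hc₁0.ne'
  have hr : ∀ μ : Measure X, IsProbabilityMeasure μ →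
      (∀ s, MeasurableSet s → μ (⇑T ⁻¹' s) = μ s) → μ U ≤ r := by
    intro μ hp hi
    have h1 : μ U + μ Uᶜ = 1 := by
      rw [measure_add_measure_compl hUm, hp.measure_univ]
    have h2 : μ U + c₁ ≤ 1 := by
      calc μ U + c₁ ≤ μ U + μ Uᶜ := by
            gcongr
            exact le_trans (min_le_left c 1) (hc μ hp hi)
        _ = 1 := h1
    exact ENNReal.le_sub_of_add_le_right hc₁top h2
  have hbound := geom_bound T U hUm hent φ hφc hφi hφr hconj r hr hpos
  have hpowt : Tendsto (fun n : ℕ => r ^ n) atTop (nhds 0) :=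
    ENNReal.tendsto_pow_atTop_nhds_zero_of_lt_one hr1
  constructor
  · exact tendsto_of_tendsto_of_tendsto_of_le_of_le tendsto_const_nhds hpowt
      (fun n => zero_le)
      (fun n => iSup_le fun μ => hbound n μ.1 μ.2.1 μ.2.2)
  · intro μ
    refine le_antisymm ?_ zero_le
    apply ge_of_tendsto' hpowt
    intro n
    exact le_trans (measure_mono (iInter_subset _ n)) (hbound n μ.1 μ.2.1 μ.2.2)
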